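/- Chain-type rule on time scales: Let T be a bounded time scale, u : T → ℝⁿ, and t ∈ T^κ_κ = T^κ ∩ T_κ. If σ is ∇-differentiable at t and u is Δ-differentiable at t, then the composition u ∘ σ is ∇-differentiable at t with (u ∘ σ)^∇(t) = σ^∇(t) · u^Δ(t). -/

import Mathlib

open Set Filter Topology RealInnerProductSpace

open Classical in
/-- Forward jump operator of a time scale `T`, with convention `inf ∅ = sSup T`. -/
noncomputable def tsSigma (T : Set ℝ) (t : ℝ) : ℝ :=
  if ({s | s ∈ T ∧ t < s}).Nonempty then sInf {s | s ∈ T ∧ t < s} else sSup T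

open Classical in
/-- Backward jump operator of a time scale `T`, with convention `sup ∅ = sInf T`. -/
noncomputable def tsRho (T : Set ℝ) (t : ℝ) : ℝ :=
  if ({s | s ∈ T ∧ s < t}).Nonempty then sSup {s | s ∈ T ∧ s < t} else sInf T

/-- `u` is Δ-differentiable at `t` (w.r.t. the time scale `T`) with derivative `L`. -/
def HasDeltaDerivAt {E : Type*} [NormedAddCommGroup E] [NormedSpace ℝ E]
    (T : Set ℝ) (u : ℝ → E) (t : ℝ) (L : E) : Prop :=
  Filter.Tendsto (fun s => (tsSigma T t - s)⁻¹ • (u (tsSigma T t) - u s))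
    (nhdsWithin t (T \ {tsSigma T t})) (nhds L)

/-- `u` is ∇-differentiable at `t` (w.r.t. the time scale `T`) with derivative `L`. -/
def HasNablaDerivAt {E : Type*} [NormedAddCommGroup E] [NormedSpace ℝ E]
    (T : Set ℝ) (u : ℝ → E) (t : ℝ) (L : E) : Prop :=
  Filter.Tendsto (fun s => (s - tsRho T t)⁻¹ • (u s - u (tsRho T t)))
    (nhdsWithin t (T \ {tsRho T t})) (nhds L)

/-- `T^κ = {t ∈ T : t ≤ ρ(max T)}`. -/
def Tup (T : Set ℝ) : Set ℝ := {t | t ∈ T ∧ t ≤ tsRho T (sSup T)}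

/-- `T_κ = {t ∈ T : σ(min T) ≤ t}`. -/
def Tlow (T : Set ℝ) : Set ℝ := {t | t ∈ T ∧ tsSigma T (sInf T) ≤ t}

section Helpers

variable {T : Set ℝ} {s t : ℝ}

lemma tsSigma_mem (hne : T.Nonempty) (hbd : Bornology.IsBounded T) (hcl : IsClosed T) (s : ℝ) :
    tsSigma T s ∈ T := by
  unfold tsSigma
  split_ifs with h
  · have h1 : sInf {r | r ∈ T ∧ s < r} ∈ closure {r | r ∈ T ∧ s < r} :=
      csInf_mem_closure h (hbd.bddBelow.mono (fun x hx => hx.1))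
    exact hcl.closure_subset_iff.mpr (fun x hx => hx.1) h1
  · exact hcl.csSup_mem hne hbd.bddAbove

lemma tsRho_mem (hne : T.Nonempty) (hbd : Bornology.IsBounded T) (hcl : IsClosed T) (s : ℝ) :
    tsRho T s ∈ T := by
  unfold tsRho
  split_ifs with h
  · have h1 : sSup {r | r ∈ T ∧ r < s} ∈ closure {r | r ∈ T ∧ r < s} :=
      csSup_mem_closure h (hbd.bddAbove.mono (fun x hx => hx.1))
    exact hcl.closure_subset_iff.mpr (fun x hx => hx.1) h1
  · exact hcl.csInf_mem hne hbd.bddBelow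

lemma le_tsSigma (hbd : Bornology.IsBounded T) (hs : s ∈ T) : s ≤ tsSigma T s := by
  unfold tsSigma
  split_ifs with h
  · exact le_csInf h (fun r hr => hr.2.le)
  · exact le_csSup hbd.bddAbove hs

lemma tsSigma_le (hbd : Bornology.IsBounded T) (ht : t ∈ T) (h : s < t) : tsSigma T s ≤ t := by
  unfold tsSigma
  rw [if_pos ⟨t, ht, h⟩]
  exact csInf_le (hbd.bddBelow.mono (fun x hx => hx.1)) ⟨ht, h⟩

lemma tsRho_le (hbd : Bornology.IsBounded T) (ht : t ∈ T) : tsRho T t ≤ t := by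
  unfold tsRho
  split_ifs with h
  · exact csSup_le h (fun r hr => hr.2.le)
  · exact csInf_le hbd.bddBelow ht

lemma le_tsRho (hbd : Bornology.IsBounded T) (hs : s ∈ T) (h : s < t) : s ≤ tsRho T t := by
  unfold tsRho
  rw [if_pos ⟨s, hs, h⟩]
  exact le_csSup (hbd.bddAbove.mono (fun x hx => hx.1)) ⟨hs, h⟩

end Helpers

lemma sigma_eq_of_rho_eq {T : Set ℝ} {t d : ℝ} (hbd : Bornology.IsBounded T)
    (htT : t ∈ T) (hκ : tsSigma T (sInf T) ≤ t)
    (hσ : Filter.Tendsto (fun s => (s - tsRho T t)⁻¹ • (tsSigma T s - tsSigma T (tsRho T t)))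
      (nhdsWithin t (T \ {tsRho T t})) (nhds d))
    (hρ : tsRho T t = t) : tsSigma T t = t := by
  by_cases hE : ({s | s ∈ T ∧ s < t}).Nonempty
  · -- sSup of the left part is t
    refine le_antisymm ?_ (le_tsSigma hbd htT)
    by_contra hgt
    push_neg at hgt
    have hsup : sSup {s | s ∈ T ∧ s < t} = t := by
      have : tsRho T t = sSup {s | s ∈ T ∧ s < t} := by unfold tsRho; rw [if_pos hE]
      rw [← this, hρ]
    -- the left-approach filter is nontrivial
    have hcl : t ∈ closure ({s | s ∈ T ∧ s < t}) := by
      have := csSup_mem_closure hE (hbd.bddAbove.mono (fun x hx => hx.1))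
      rwa [hsup] at this
    have hnb : (nhdsWithin t ({s | s ∈ T ∧ s < t})).NeBot := mem_closure_iff_nhdsWithin_neBot.mp hcl
    have hle : nhdsWithin t ({s | s ∈ T ∧ s < t}) ≤ nhdsWithin t (T \ {tsRho T t}) := by
      apply nhdsWithin_mono
      rintro x ⟨hxT, hxlt⟩
      exact ⟨hxT, by rw [hρ]; exact ne_of_lt hxlt⟩
    have hσ' := hσ.mono_left hle
    -- lower bound blows up
    have hlow : ∀ᶠ s in nhdsWithin t ({s | s ∈ T ∧ s < t}),
        (tsSigma T t - t) * (t - s)⁻¹ ≤ (s - tsRho T t)⁻¹ • (tsSigma T s - tsSigma T (tsRho T t)) := by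
      filter_upwards [eventually_mem_nhdsWithin] with s hs
      rcases hs with ⟨hsT, hslt⟩
      rw [hρ, smul_eq_mul]
      have h1 : tsSigma T s ≤ t := tsSigma_le hbd htT hslt
      have h2 : (s - t)⁻¹ < 0 := inv_lt_zero.mpr (by linarith)
      have h3 : tsSigma T s - tsSigma T t ≤ t - tsSigma T t := by linarith
      have h4 : (s - t)⁻¹ * (t - tsSigma T t) ≤ (s - t)⁻¹ * (tsSigma T s - tsSigma T t) :=
        mul_le_mul_of_nonpos_left h3 h2.le
      have h5 : (tsSigma T t - t) * (t - s)⁻¹ = (s - t)⁻¹ * (t - tsSigma T t) := by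
        rw [show t - s = -(s - t) by ring, inv_neg]; ring
      linarith
    have hmt : Filter.Tendsto (fun s => (tsSigma T t - t) * (t - s)⁻¹)
        (nhdsWithin t ({s | s ∈ T ∧ s < t})) Filter.atTop := by
      apply Filter.Tendsto.const_mul_atTop (by linarith : (0:ℝ) < tsSigma T t - t)
      apply tendsto_inv_nhdsGT_zero.comp
      rw [tendsto_nhdsWithin_iff]
      constructor
      · have : Filter.Tendsto (fun s => t - s) (nhds t) (nhds (t - t)) :=
          (tendsto_const_nhds.sub tendsto_id)
        simpa using this.mono_left nhdsWithin_le_nhds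
      · filter_upwards [eventually_mem_nhdsWithin] with s hs
        exact sub_pos.mpr hs.2
    have hgt' := Filter.tendsto_atTop_mono' _ hlow hmt
    exact not_tendsto_nhds_of_tendsto_atTop hgt' d hσ'
  · -- no points to the left: t = min T
    have hρ' : tsRho T t = sInf T := by unfold tsRho; rw [if_neg hE]
    have : sInf T = t := by rw [← hρ', hρ]
    rw [this] at hκ
    exact le_antisymm hκ (le_tsSigma hbd htT)

lemma sigma_rho_eq {T : Set ℝ} {t d : ℝ} (hne : T.Nonempty) (hbd : Bornology.IsBounded T)
    (hcl : IsClosed T) (htT : t ∈ T) (hκ : tsSigma T (sInf T) ≤ t)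
    (hσ : Filter.Tendsto (fun s => (s - tsRho T t)⁻¹ • (tsSigma T s - tsSigma T (tsRho T t)))
      (nhdsWithin t (T \ {tsRho T t})) (nhds d)) :
    tsSigma T (tsRho T t) = t := by
  rcases eq_or_lt_of_le (tsRho_le hbd htT) with h | h
  · rw [h]; exact sigma_eq_of_rho_eq hbd htT hκ hσ h
  · refine le_antisymm (tsSigma_le hbd htT h) ?_
    unfold tsSigma
    rw [if_pos ⟨t, htT, h⟩]
    refine le_csInf ⟨t, htT, h⟩ (fun r hr => ?_)
    by_contra hrt
    push_neg at hrt
    exact absurd (le_tsRho hbd hr.1 hrt) (not_le.mpr hr.2)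


/-- Chain-type rule: if `σ` is ∇-differentiable at `t ∈ T^κ_κ` and `u` is
Δ-differentiable at `t`, then `u ∘ σ` is ∇-differentiable at `t` with
`(u ∘ σ)^∇(t) = σ^∇(t) • u^Δ(t)`. -/
theorem stmt_10 (T : Set ℝ) (hne : T.Nonempty) (hbd : Bornology.IsBounded T) (hcl : IsClosed T)
    (hcard : ∃ x ∈ T, ∃ y ∈ T, ∃ z ∈ T, x ≠ y ∧ x ≠ z ∧ y ≠ z)
    (n : ℕ) (u : ℝ → EuclideanSpace ℝ (Fin n))
    (t : ℝ) (ht : t ∈ Tup T ∩ Tlow T)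
    (d : ℝ) (hσ : HasNablaDerivAt T (tsSigma T) t d)
    (L : EuclideanSpace ℝ (Fin n)) (hu : HasDeltaDerivAt T u t L) :
    HasNablaDerivAt T (fun s => u (tsSigma T s)) t (d • L) := by
  obtain ⟨⟨htT, htup⟩, ⟨-, htlow⟩⟩ := ht
  unfold HasNablaDerivAt at hσ ⊢
  unfold HasDeltaDerivAt at hu
  have hρle : tsRho T t ≤ t := tsRho_le hbd htT
  have hσρ : tsSigma T (tsRho T t) = t := sigma_rho_eq hne hbd hcl htT htlow hσ
  simp only [hσρ]
  by_cases hst : tsSigma T t = t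
  · -- right-dense case
    -- d * (t - ρ) = 0
    have hd0 : d * (t - tsRho T t) = 0 := by
      rcases eq_or_lt_of_le hρle with h | h
      · rw [h]; ring
      · have htS : t ∈ T \ {tsRho T t} := ⟨htT, by simp [ne_of_gt h]⟩
        have hd : d = (t - tsRho T t)⁻¹ • (tsSigma T t - tsSigma T (tsRho T t)) :=
          tendsto_nhds_unique (hσ.mono_left (pure_le_nhdsWithin htS)) (tendsto_pure_nhds _ t)
        rw [hd, hσρ, hst]
        simp
    -- σ tends to t within the punctured filter
    have hσtend : Filter.Tendsto (tsSigma T) (nhdsWithin t (T \ {tsRho T t})) (nhds t) := by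
      have heq : ∀ s ∈ T \ {tsRho T t}, tsSigma T s =
          ((s - tsRho T t)⁻¹ • (tsSigma T s - tsSigma T (tsRho T t))) * (s - tsRho T t) + t := by
        intro s hs
        have hsne : s - tsRho T t ≠ 0 := sub_ne_zero.mpr hs.2
        rw [hσρ, smul_eq_mul]
        field_simp
        ring
      have h2 : Filter.Tendsto (fun s =>
          ((s - tsRho T t)⁻¹ • (tsSigma T s - tsSigma T (tsRho T t))) * (s - tsRho T t) + t)
          (nhdsWithin t (T \ {tsRho T t})) (nhds (d * (t - tsRho T t) + t)) := by
        apply Filter.Tendsto.add_const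
        apply hσ.mul
        exact ((tendsto_id.sub tendsto_const_nhds).mono_left nhdsWithin_le_nhds)
      rw [hd0, zero_add] at h2
      exact h2.congr' (by filter_upwards [eventually_mem_nhdsWithin] with s hs using (heq s hs).symm)
    -- split into A (σ s = t) and B (σ s ≠ t)
    have hsplit : T \ {tsRho T t} =
        ((T \ {tsRho T t}) ∩ {s | tsSigma T s = t}) ∪ ((T \ {tsRho T t}) ∩ {s | tsSigma T s ≠ t}) := by
      ext x; by_cases hx : tsSigma T x = t <;> simp [hx]
    rw [hsplit, nhdsWithin_union, Filter.tendsto_sup]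
    constructor
    · -- on A: the function is 0
      set A := (T \ {tsRho T t}) ∩ {s | tsSigma T s = t} with hA
      by_cases hbot : nhdsWithin t A = ⊥
      · rw [hbot]; exact tendsto_bot
      · haveI : (nhdsWithin t A).NeBot := ⟨hbot⟩
        have hAS : A ⊆ T \ {tsRho T t} := inter_subset_left
        have hgA : Filter.Tendsto (fun s => (s - tsRho T t)⁻¹ • (tsSigma T s - tsSigma T (tsRho T t)))
            (nhdsWithin t A) (nhds d) := hσ.mono_left (nhdsWithin_mono _ hAS)
        have hg0 : Filter.Tendsto (fun s => (s - tsRho T t)⁻¹ • (tsSigma T s - tsSigma T (tsRho T t)))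
            (nhdsWithin t A) (nhds 0) := by
          apply Filter.Tendsto.congr' _ tendsto_const_nhds
          filter_upwards [eventually_mem_nhdsWithin] with s hs
          rw [hσρ, hs.2, sub_self, smul_zero]
        have hd : d = 0 := tendsto_nhds_unique hgA hg0
        rw [hd, zero_smul]
        apply Filter.Tendsto.congr' _ tendsto_const_nhds
        filter_upwards [eventually_mem_nhdsWithin] with s hs
        rw [hs.2, sub_self, smul_zero]
    · -- on B: factor as product
      set B := (T \ {tsRho T t}) ∩ {s | tsSigma T s ≠ t} with hB
      have hBS : B ⊆ T \ {tsRho T t} := inter_subset_left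
      rw [hst] at hu
      have hcomp : Filter.Tendsto (fun s => (t - tsSigma T s)⁻¹ • (u t - u (tsSigma T s)))
          (nhdsWithin t B) (nhds L) := by
        apply hu.comp
        rw [tendsto_nhdsWithin_iff]
        refine ⟨hσtend.mono_left (nhdsWithin_mono _ hBS), ?_⟩
        filter_upwards [eventually_mem_nhdsWithin] with s hs
        exact ⟨tsSigma_mem hne hbd hcl s, by simpa using hs.2⟩
      have hgB : Filter.Tendsto (fun s => (s - tsRho T t)⁻¹ • (tsSigma T s - tsSigma T (tsRho T t)))
          (nhdsWithin t B) (nhds d) := hσ.mono_left (nhdsWithin_mono _ hBS)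
      have hprod := hgB.smul hcomp
      apply hprod.congr'
      filter_upwards [eventually_mem_nhdsWithin] with s hs
      have hne' : t - tsSigma T s ≠ 0 := fun h => hs.2 (by linarith [sub_eq_zero.mp h])
      rw [hσρ, smul_eq_mul, smul_smul]
      have hm : (tsSigma T s - t) * (t - tsSigma T s)⁻¹ = -1 := by
        rw [show tsSigma T s - t = -(t - tsSigma T s) by ring, neg_mul, mul_inv_cancel₀ hne']
      have hc : (s - tsRho T t)⁻¹ * (tsSigma T s - t) * (t - tsSigma T s)⁻¹ = -(s - tsRho T t)⁻¹ := by
        rw [mul_assoc, hm]; ring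
      rw [hc, neg_smul, ← smul_neg, neg_sub]
  · -- right-scattered case: the filters are pure t
    have htσ : t < tsSigma T t := lt_of_le_of_ne (le_tsSigma hbd htT) (Ne.symm hst)
    have hρlt : tsRho T t < t := by
      rcases eq_or_lt_of_le hρle with h | h
      · exact absurd (sigma_eq_of_rho_eq hbd htT htlow hσ h) hst
      · exact h
    have key : ∀ s ∈ T, tsRho T t < s → s < tsSigma T t → s = t := by
      intro s hs h1 h2
      rcases lt_trichotomy s t with h | h | h
      · exact absurd (le_tsRho hbd hs h) (not_le.mpr h1)
      · exact h
      · exact absurd (tsSigma_le hbd hs h) (not_le.mpr h2)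
    have hFρ : nhdsWithin t (T \ {tsRho T t}) = pure t := by
      refine le_antisymm ?_ (pure_le_nhdsWithin ⟨htT, by simp [ne_of_gt hρlt]⟩)
      rw [← Filter.principal_singleton, Filter.le_principal_iff]
      apply mem_nhdsWithin.mpr
      exact ⟨Ioo (tsRho T t) (tsSigma T t), isOpen_Ioo, ⟨hρlt, htσ⟩,
        by rintro x ⟨⟨hx1, hx2⟩, hxT, -⟩; exact key x hxT hx1 hx2⟩
    have hFσ : nhdsWithin t (T \ {tsSigma T t}) = pure t := by
      refine le_antisymm ?_ (pure_le_nhdsWithin ⟨htT, by simp only [mem_singleton_iff]; exact fun h => hst h.symm⟩)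
      rw [← Filter.principal_singleton, Filter.le_principal_iff]
      apply mem_nhdsWithin.mpr
      exact ⟨Ioo (tsRho T t) (tsSigma T t), isOpen_Ioo, ⟨hρlt, htσ⟩,
        by rintro x ⟨⟨hx1, hx2⟩, hxT, -⟩; exact key x hxT hx1 hx2⟩
    rw [hFρ] at hσ ⊢
    rw [hFσ] at hu
    have hd : d = (t - tsRho T t)⁻¹ • (tsSigma T t - tsSigma T (tsRho T t)) :=
      tendsto_nhds_unique hσ (tendsto_pure_nhds _ t)
    have hL : L = (tsSigma T t - t)⁻¹ • (u (tsSigma T t) - u t) :=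
      tendsto_nhds_unique hu (tendsto_pure_nhds _ t)
    have hgoal : d • L = (t - tsRho T t)⁻¹ • (u (tsSigma T t) - u t) := by
      rw [hd, hL, hσρ, smul_eq_mul, smul_smul]
      congr 1
      have h1 : tsSigma T t - t ≠ 0 := sub_ne_zero.mpr (ne_of_gt htσ)
      rw [mul_assoc, mul_inv_cancel₀ h1, mul_one]
    rw [hgoal]
    exact tendsto_pure_nhds _ t
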